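/- Let f : 𝔻 → S be a holomorphic map from the open unit disk 𝔻 into the vertical strip S = {w ∈ ℂ : |Re w| < M} for some M > 0. Then for all z, w ∈ 𝔻, |Re f(z) − Re f(w)| ≤ (4M/π) · d_𝔻(z, w), where d_𝔻 is the Poincaré distance on 𝔻 with curvature −1 normalization d_𝔻(0, r) = arctanh r. -/

import Mathlib

open Metric

noncomputable def artanh (r : ℝ) : ℝ := Real.log ((1 + r) / (1 - r)) / 2

/-- The Poincaré hyperbolic distance on the unit disk (curvature -1 normalization,
`d(0,r) = artanh r`). -/
noncomputable def hypDistDisk (z w : ℂ) : ℝ :=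
  artanh (‖(z - w) / (1 - (starRingEnd ℂ) z * w)‖)

namespace StripSchwarzPick

open Complex

/-- Möbius transformation of the disk. -/
noncomputable def mob (a z : ℂ) : ℂ := (z - a) / (1 - (starRingEnd ℂ) a * z)

lemma normSq_identity (a z : ℂ) :
    normSq (1 - (starRingEnd ℂ) a * z) - normSq (z - a) = (1 - normSq a) * (1 - normSq z) := by
  simp only [normSq_apply, Complex.sub_re, Complex.sub_im, Complex.mul_re, Complex.mul_im,
    Complex.conj_re, Complex.conj_im, Complex.one_re, Complex.one_im]
  ring

lemma one_sub_ne {x : ℂ} (hx : ‖x‖ < 1) : (1 : ℂ) - x ≠ 0 := by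
  intro h
  have hx1 : x = 1 := by linear_combination -h
  rw [hx1] at hx; simp at hx

lemma one_add_ne {x : ℂ} (hx : ‖x‖ < 1) : (1 : ℂ) + x ≠ 0 := by
  have := one_sub_ne (x := -x) (by simpa using hx)
  simpa [sub_neg_eq_add] using this

lemma mob_denom_ne {a z : ℂ} (ha : ‖a‖ < 1) (hz : ‖z‖ ≤ 1) :
    (1 : ℂ) - (starRingEnd ℂ) a * z ≠ 0 := by
  apply one_sub_ne
  rw [norm_mul, Complex.norm_conj]
  calc ‖a‖ * ‖z‖ ≤ ‖a‖ * 1 :=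
        mul_le_mul_of_nonneg_left hz (norm_nonneg a)
    _ < 1 := by simpa using ha

lemma mob_mem {a z : ℂ} (ha : ‖a‖ < 1) (hz : ‖z‖ < 1) :
    ‖mob a z‖ < 1 := by
  have hden := mob_denom_ne ha hz.le
  have hdpos : 0 < ‖1 - (starRingEnd ℂ) a * z‖ := (norm_pos_iff.mpr hden)
  rw [mob, norm_div, div_lt_one hdpos]
  have key : normSq (1 - (starRingEnd ℂ) a * z) - normSq (z - a)
      = (1 - normSq a) * (1 - normSq z) := normSq_identity a z
  have h1 : normSq a < 1 := by rw [← Complex.sq_norm]; nlinarith [norm_nonneg a]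
  have h2 : normSq z < 1 := by rw [← Complex.sq_norm]; nlinarith [norm_nonneg z]
  have h3 : normSq (z - a) < normSq (1 - (starRingEnd ℂ) a * z) := by nlinarith
  have h4 := Real.sqrt_lt_sqrt (normSq_nonneg _) h3
  simpa [Complex.norm_def] using h4

lemma hasDerivAt_mob (a : ℂ) {z : ℂ} (h : (1 : ℂ) - (starRingEnd ℂ) a * z ≠ 0) :
    HasDerivAt (mob a) ((1 - (starRingEnd ℂ) a * a) / (1 - (starRingEnd ℂ) a * z) ^ 2) z := by
  have hnum : HasDerivAt (fun z : ℂ => z - a) 1 z := (hasDerivAt_id z).sub_const a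
  have hden : HasDerivAt (fun z : ℂ => 1 - (starRingEnd ℂ) a * z) (-((starRingEnd ℂ) a)) z := by
    simpa using (((hasDerivAt_id z).const_mul ((starRingEnd ℂ) a)).const_sub 1)
  have := hnum.div hden h
  refine this.congr_deriv ?_
  field_simp
  ring

lemma abs_one_sub_conj_mul_self {a : ℂ} (ha : ‖a‖ < 1) :
    ‖1 - (starRingEnd ℂ) a * a‖ = 1 - ‖a‖ ^ 2 := by
  have h : (1 : ℂ) - (starRingEnd ℂ) a * a = ((1 - ‖a‖ ^ 2 : ℝ) : ℂ) := by
    rw [mul_comm, Complex.mul_conj']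
    push_cast
    ring
  rw [h, Complex.norm_real, Real.norm_eq_abs, _root_.abs_of_nonneg]
  nlinarith [norm_nonneg a]

lemma schwarz_pick_deriv {h : ℂ → ℂ} (hd : DifferentiableOn ℂ h (ball 0 1))
    (hm : ∀ z ∈ ball (0 : ℂ) 1, ‖h z‖ < 1) {ζ : ℂ} (hζ : ‖ζ‖ < 1) :
    ‖deriv h ζ‖ * (1 - ‖ζ‖ ^ 2) ≤ 1 - ‖h ζ‖ ^ 2 := by
  have hζb : ζ ∈ ball (0 : ℂ) 1 := by simpa [Complex.norm_def] using hζ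
  set b := h ζ with hb
  have hbabs : ‖b‖ < 1 := hm ζ hζb
  set T : ℂ → ℂ := mob (-ζ) with hT
  have hTmem : ∀ η ∈ ball (0 : ℂ) 1, T η ∈ ball (0 : ℂ) 1 := by
    intro η hη
    simp only [mem_ball, dist_zero_right] at hη ⊢
    exact mob_mem (by simpa using hζ) hη
  set k : ℂ → ℂ := fun η => mob b (h (T η)) with hk
  have hdk : DifferentiableOn ℂ k (ball 0 1) := by
    intro η hη
    have hη' : ‖η‖ < 1 := by
      simpa [mem_ball, dist_zero_right] using hη
    have hTd : DifferentiableAt ℂ T η :=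
      (hasDerivAt_mob (-ζ) (mob_denom_ne (by simpa using hζ) hη'.le)).differentiableAt
    have hTη := hTmem η hη
    have hhd : DifferentiableAt ℂ h (T η) := hd.differentiableAt (isOpen_ball.mem_nhds hTη)
    have hhT : ‖h (T η)‖ < 1 := hm _ hTη
    have hBd : DifferentiableAt ℂ (mob b) (h (T η)) :=
      (hasDerivAt_mob b (mob_denom_ne hbabs hhT.le)).differentiableAt
    exact ((hBd.comp _ hhd).comp _ hTd).differentiableWithinAt
  have hk0 : k 0 = 0 := by simp [hk, hT, mob, hb]
  have hmaps : Set.MapsTo k (ball 0 1) (ball (k 0) 1) := by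
    rw [hk0]
    intro η hη
    have := mob_mem hbabs (hm _ (hTmem η hη))
    simpa [mem_ball, dist_zero_right] using this
  have hsch : ‖deriv k 0‖ ≤ 1 / 1 :=
    Complex.norm_deriv_le_div_of_mapsTo_ball hdk (hmaps.mono_right ball_subset_closedBall) one_pos
  have hT0 : T 0 = ζ := by simp [hT, mob]
  have hTder : HasDerivAt T ((1 - (starRingEnd ℂ) ζ * ζ)) 0 := by
    have := hasDerivAt_mob (-ζ) (z := 0) (by simp)
    simpa using this
  have hhder : HasDerivAt h (deriv h ζ) (T 0) := by
    rw [hT0]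
    exact (hd.differentiableAt (isOpen_ball.mem_nhds hζb)).hasDerivAt
  have hBder : HasDerivAt (mob b)
      ((1 - (starRingEnd ℂ) b * b) / (1 - (starRingEnd ℂ) b * b) ^ 2) (h (T 0)) := by
    rw [hT0, ← hb]
    exact hasDerivAt_mob b (mob_denom_ne hbabs hbabs.le)
  have hkder : HasDerivAt k
      ((1 - (starRingEnd ℂ) b * b) / (1 - (starRingEnd ℂ) b * b) ^ 2 *
        (deriv h ζ * (1 - (starRingEnd ℂ) ζ * ζ))) 0 :=
    by rw [hk]; exact (hBder.comp 0 (hhder.comp 0 hTder) : _)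
  rw [hkder.deriv] at hsch
  have hbne : (1 : ℂ) - (starRingEnd ℂ) b * b ≠ 0 := mob_denom_ne hbabs hbabs.le
  have habs : ‖(1 - (starRingEnd ℂ) b * b) / (1 - (starRingEnd ℂ) b * b) ^ 2 *
        (deriv h ζ * (1 - (starRingEnd ℂ) ζ * ζ))‖
      = (1 - ‖b‖ ^ 2)⁻¹ * (‖deriv h ζ‖ * (1 - ‖ζ‖ ^ 2)) := by
    rw [norm_mul, norm_div, norm_mul, norm_pow, abs_one_sub_conj_mul_self hbabs,
      abs_one_sub_conj_mul_self hζ]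
    have h1 : (0:ℝ) < 1 - ‖b‖ ^ 2 := by nlinarith [norm_nonneg b]
    field_simp
  rw [habs] at hsch
  have h1 : (0:ℝ) < 1 - ‖b‖ ^ 2 := by nlinarith [norm_nonneg b]
  rw [inv_mul_le_iff₀ h1] at hsch
  simpa using hsch

lemma strip_tan {v : ℂ} (hv : |v.re| < Real.pi / 4) :
    Complex.cos v ≠ 0 ∧ ‖Complex.tan v‖ < 1 := by
  set E := Complex.exp (v * I) with hE
  have hEne : E ≠ 0 := Complex.exp_ne_zero _
  have hq : E ^ 2 = Complex.exp (2 * v * I) := by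
    rw [hE, ← Complex.exp_nat_mul]; ring_nf
  have hqre : 0 < (E ^ 2).re := by
    rw [hq, Complex.exp_re]
    have h1 : (2 * v * I).im = 2 * v.re := by simp [Complex.mul_im, Complex.mul_re]
    have h2 : Real.cos ((2 * v * I).im) > 0 := by
      rw [h1]
      apply Real.cos_pos_of_mem_Ioo
      constructor <;> [nlinarith [abs_lt.mp hv]; nlinarith [abs_lt.mp hv]]
    positivity
  have hEinv : Complex.exp (-v * I) = E⁻¹ := by
    rw [hE, ← Complex.exp_neg]; ring_nf
  have hlt : ‖1 - E ^ 2‖ < ‖1 + E ^ 2‖ := by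
    have hns : normSq (1 + E ^ 2) - normSq (1 - E ^ 2) = 4 * (E ^ 2).re := by
      simp only [normSq_apply, Complex.add_re, Complex.add_im, Complex.sub_re, Complex.sub_im,
        Complex.one_re, Complex.one_im]
      ring
    have h3 : normSq (1 - E ^ 2) < normSq (1 + E ^ 2) := by nlinarith
    have h4 := Real.sqrt_lt_sqrt (normSq_nonneg _) h3
    simpa [Complex.norm_def] using h4
  have hcosE : Complex.cos v = E⁻¹ * (1 + E ^ 2) / 2 := by
    rw [Complex.cos, hEinv]
    field_simp
    ring
  have hsinE : Complex.sin v = E⁻¹ * (1 - E ^ 2) * I / 2 := by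
    rw [Complex.sin, hEinv]
    field_simp
    ring
  have hcne : Complex.cos v ≠ 0 := by
    rw [hcosE]
    have h5 : (1 : ℂ) + E ^ 2 ≠ 0 := by
      intro h
      have h6 : E ^ 2 = -1 := by linear_combination h
      rw [h6] at hqre; norm_num at hqre
    exact div_ne_zero (mul_ne_zero (inv_ne_zero hEne) h5) two_ne_zero
  refine ⟨hcne, ?_⟩
  rw [Complex.tan_eq_sin_div_cos, norm_div, div_lt_one ((norm_pos_iff.mpr hcne)), hcosE, hsinE]
  simp only [norm_div, norm_mul, Complex.norm_I, Complex.norm_two, mul_one]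
  have hEpos : 0 < ‖E⁻¹‖ := (norm_pos_iff.mpr (inv_ne_zero hEne))
  gcongr

lemma deriv_bound_strip {M : ℝ} (hM : 0 < M) {g : ℂ → ℂ}
    (hg : DifferentiableOn ℂ g (ball 0 1))
    (hm : ∀ z ∈ ball (0 : ℂ) 1, |(g z).re| < M) {ζ : ℂ} (hζ : ‖ζ‖ < 1) :
    ‖deriv g ζ‖ * (1 - ‖ζ‖ ^ 2) ≤ 4 * M / Real.pi := by
  have hπ : 0 < Real.pi := Real.pi_pos
  set c : ℝ := Real.pi / (4 * M) with hc
  have hcpos : 0 < c := by positivity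
  have hre : ∀ z ∈ ball (0 : ℂ) 1, |((c : ℂ) * g z).re| < Real.pi / 4 := by
    intro z hz
    have h0 : ((c : ℂ) * g z).re = c * (g z).re := by
      simp [Complex.mul_re, Complex.ofReal_re, Complex.ofReal_im]
    rw [h0, abs_mul, abs_of_pos hcpos]
    calc c * |(g z).re| < c * M := by exact mul_lt_mul_of_pos_left (hm z hz) hcpos
      _ = Real.pi / 4 := by rw [hc]; field_simp
  set h : ℂ → ℂ := fun z => Complex.tan ((c : ℂ) * g z) with hh
  have hζb : ζ ∈ ball (0 : ℂ) 1 := by simpa [mem_ball, dist_zero_right] using hζ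
  have hcos := (strip_tan (hre ζ hζb)).1
  have htan := (strip_tan (hre ζ hζb)).2
  have hgd : HasDerivAt g (deriv g ζ) ζ :=
    (hg.differentiableAt (isOpen_ball.mem_nhds hζb)).hasDerivAt
  have hinner : HasDerivAt (fun z => (c : ℂ) * g z) ((c : ℂ) * deriv g ζ) ζ := hgd.const_mul _
  have houter : HasDerivAt Complex.tan (1 / Complex.cos ((c : ℂ) * g ζ) ^ 2) ((c : ℂ) * g ζ) :=
    Complex.hasDerivAt_tan hcos
  have hhd : HasDerivAt h (1 / Complex.cos ((c : ℂ) * g ζ) ^ 2 * ((c : ℂ) * deriv g ζ)) ζ :=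
    by rw [hh]; exact houter.comp ζ hinner
  have hdiffh : DifferentiableOn ℂ h (ball 0 1) := by
    intro z hz
    have hgz : HasDerivAt g (deriv g z) z :=
      (hg.differentiableAt (isOpen_ball.mem_nhds hz)).hasDerivAt
    exact (((Complex.hasDerivAt_tan (strip_tan (hre z hz)).1).comp z
      (hgz.const_mul _)).differentiableAt).differentiableWithinAt
  have hmapsh : ∀ z ∈ ball (0 : ℂ) 1, ‖h z‖ < 1 := fun z hz =>
    (strip_tan (hre z hz)).2
  have hSP := schwarz_pick_deriv hdiffh hmapsh hζ
  rw [hhd.deriv] at hSP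
  set t := ‖Complex.tan ((c : ℂ) * g ζ)‖ with ht
  set C := ‖Complex.cos ((c : ℂ) * g ζ)‖ with hC
  have hCpos : 0 < C := (norm_pos_iff.mpr hcos)
  have habsder : ‖1 / Complex.cos ((c : ℂ) * g ζ) ^ 2 * ((c : ℂ) * deriv g ζ)‖
      = C⁻¹ ^ 2 * (c * ‖deriv g ζ‖) := by
    simp [norm_mul, norm_div, norm_pow, Complex.norm_real, abs_of_pos hcpos, ← hC]
  rw [habsder] at hSP
  have hkey : (1 - t ^ 2) * C ^ 2 ≤ 1 := by
    have h1 : ((1 + Complex.tan ((c : ℂ) * g ζ) ^ 2)⁻¹) = Complex.cos ((c : ℂ) * g ζ) ^ 2 :=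
      Complex.inv_one_add_tan_sq hcos
    have h2 : (‖1 + Complex.tan ((c : ℂ) * g ζ) ^ 2‖)⁻¹ = C ^ 2 := by
      rw [← norm_pow, ← h1, norm_inv]
    have h3 : 1 - t ^ 2 ≤ ‖1 + Complex.tan ((c : ℂ) * g ζ) ^ 2‖ := by
      have h5 := norm_sub_le (1 + Complex.tan ((c : ℂ) * g ζ) ^ 2) (Complex.tan ((c : ℂ) * g ζ) ^ 2)
      simpa [norm_pow, ← ht] using h5
    have h4 : 0 < ‖1 + Complex.tan ((c : ℂ) * g ζ) ^ 2‖ := by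
      rw [← inv_pos, h2]; positivity
    calc (1 - t ^ 2) * C ^ 2 ≤ ‖1 + Complex.tan ((c : ℂ) * g ζ) ^ 2‖ * C ^ 2 := by
          apply mul_le_mul_of_nonneg_right h3 (by positivity)
      _ = 1 := by rw [← h2]; field_simp
  have hfin : C⁻¹ ^ 2 * (c * ‖deriv g ζ‖) * (1 - ‖ζ‖ ^ 2) ≤ 1 - t ^ 2 :=
    hSP
  have h4M : (4 : ℝ) * M / Real.pi = c⁻¹ := by rw [hc]; field_simp
  rw [h4M]
  have hmul := mul_le_mul_of_nonneg_right hfin (le_of_lt (by positivity : (0:ℝ) < C ^ 2))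
  calc ‖deriv g ζ‖ * (1 - ‖ζ‖ ^ 2)
      = (C⁻¹ ^ 2 * (c * ‖deriv g ζ‖) * (1 - ‖ζ‖ ^ 2)) * C ^ 2 * c⁻¹ := by
        field_simp
    _ ≤ (1 - t ^ 2) * C ^ 2 * c⁻¹ := by
        apply mul_le_mul_of_nonneg_right _ (by positivity)
        exact hmul
    _ ≤ 1 * c⁻¹ := by
        apply mul_le_mul_of_nonneg_right hkey (by positivity)
    _ = c⁻¹ := one_mul _

lemma hasDerivAt_artanh {t : ℝ} (h1 : -1 < t) (h2 : t < 1) :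
    HasDerivAt artanh (1 / (1 - t ^ 2)) t := by
  have h1t : (0:ℝ) < 1 + t := by linarith
  have h2t : (0:ℝ) < 1 - t := by linarith
  have hn : HasDerivAt (fun r : ℝ => 1 + r) 1 t := by
    simpa using (hasDerivAt_id t).const_add (1:ℝ)
  have hd : HasDerivAt (fun r : ℝ => 1 - r) (-1) t := by
    simpa using (hasDerivAt_id t).const_sub (1:ℝ)
  have hdiv : HasDerivAt (fun r : ℝ => (1 + r) / (1 - r)) (2 / (1 - t) ^ 2) t := by
    have := hn.div hd h2t.ne'
    refine this.congr_deriv ?_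
    field_simp
    ring
  have hpos : (0:ℝ) < (1 + t) / (1 - t) := by positivity
  have hlog := (Real.hasDerivAt_log hpos.ne').comp t hdiv
  have := hlog.div_const 2
  refine this.congr_deriv ?_
  have h3 : (1:ℝ) - t ^ 2 ≠ 0 := by nlinarith
  field_simp
  ring

lemma artanh_zero : artanh 0 = 0 := by simp [artanh]

lemma mono_aux {s K : ℝ} (hs : 0 ≤ s) (hs1 : s < 1) {G : ℝ → ℝ}
    (hG : ∀ t ∈ Set.Icc 0 s, DifferentiableAt ℝ G t)
    (hG2 : ∀ t ∈ Set.Icc 0 s, |deriv G t| ≤ K / (1 - t ^ 2)) :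
    |G s - G 0| ≤ K * artanh s := by
  have key : ∀ ε : ℝ, ε = 1 ∨ ε = -1 →
      ε * (G s - G 0) ≤ K * artanh s := by
    intro ε hε
    set φ : ℝ → ℝ := fun t => K * artanh t - ε * G t with hφ
    have hder : ∀ t ∈ Set.Icc 0 s, HasDerivAt φ (K * (1 / (1 - t ^ 2)) - ε * deriv G t) t := by
      intro t ht
      obtain ⟨ht0, hts⟩ := ht
      have h1 : -1 < t := by linarith
      have h2 : t < 1 := lt_of_le_of_lt hts hs1
      exact ((hasDerivAt_artanh h1 h2).const_mul K).sub
        (((hG t ⟨ht0, hts⟩).hasDerivAt).const_mul ε)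
    have hmono : MonotoneOn φ (Set.Icc 0 s) := by
      apply monotoneOn_of_deriv_nonneg (convex_Icc 0 s)
      · intro t ht
        exact (hder t ht).continuousAt.continuousWithinAt
      · intro t ht
        rw [interior_Icc] at ht
        exact ((hder t (Set.Ioo_subset_Icc_self ht)).differentiableAt).differentiableWithinAt
      · intro t ht
        rw [interior_Icc] at ht
        rw [(hder t (Set.Ioo_subset_Icc_self ht)).deriv]
        have h2 : t < 1 := lt_of_lt_of_le ht.2 hs1.le
        have hpos : (0:ℝ) < 1 - t ^ 2 := by nlinarith [ht.1]
        have hb := hG2 t (Set.Ioo_subset_Icc_self ht)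
        have habs : ε * deriv G t ≤ |deriv G t| := by
          rcases hε with h | h <;> rw [h]
          · simpa using le_abs_self _
          · have := neg_abs_le (deriv G t)
            linarith [abs_nonneg (deriv G t)]
        have hle : ε * deriv G t ≤ K / (1 - t ^ 2) := le_trans habs hb
        have hrw : K * (1 / (1 - t ^ 2)) = K / (1 - t ^ 2) := by ring
        linarith [hrw ▸ hle]
    have h0 : (0:ℝ) ∈ Set.Icc 0 s := ⟨le_refl 0, hs⟩
    have hss : s ∈ Set.Icc 0 s := ⟨hs, le_refl s⟩
    have := hmono h0 hss hs
    simp only [hφ, artanh_zero, mul_zero, zero_sub] at this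
    linarith
  have h1 := key 1 (Or.inl rfl)
  have h2 := key (-1) (Or.inr rfl)
  rw [abs_le]
  constructor <;> linarith

end StripSchwarzPick

open StripSchwarzPick Complex in
/-- A holomorphic map of the disk into the vertical strip `{|Re w| < M}` has real part
`(4M/π)`-Lipschitz with respect to the Poincaré distance on `𝔻`. -/
theorem re_of_holomorphic_into_strip_lipschitz (M : ℝ) (hM : 0 < M) (f : ℂ → ℂ)
    (hf : DifferentiableOn ℂ f (ball 0 1))
    (hmaps : ∀ z ∈ ball (0 : ℂ) 1, |(f z).re| < M) :
    ∀ z ∈ ball (0 : ℂ) 1, ∀ w ∈ ball (0 : ℂ) 1,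
      |(f z).re - (f w).re| ≤ (4 * M / Real.pi) * hypDistDisk z w := by
  intro z hz w hw
  have hπ : 0 < Real.pi := Real.pi_pos
  have hz' : ‖z‖ < 1 := by
    simpa [mem_ball, dist_zero_right] using hz
  have hw' : ‖w‖ < 1 := by
    simpa [mem_ball, dist_zero_right] using hw
  by_cases hzw : z = w
  · subst hzw
    simp [hypDistDisk, artanh]
  -- setup
  have hdne : (1 : ℂ) - (starRingEnd ℂ) w * z ≠ 0 := mob_denom_ne hw' hz'.le
  set a : ℂ := mob w z with ha
  have ha1 : ‖a‖ < 1 := mob_mem hw' hz'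
  have hane : a ≠ 0 := div_ne_zero (sub_ne_zero.2 hzw) hdne
  set s : ℝ := ‖a‖ with hsdef
  have hs0 : 0 < s := (norm_pos_iff.mpr hane)
  have hs1 : s < 1 := ha1
  set u : ℂ := a / (s : ℂ) with hu
  have hsne : (s : ℂ) ≠ 0 := by
    simpa using hs0.ne'
  have huabs : ‖u‖ = 1 := by
    rw [hu, norm_div, Complex.norm_real, Real.norm_eq_abs, _root_.abs_of_pos hs0, ← hsdef, div_self hs0.ne']
  set T : ℂ → ℂ := fun ζ => mob (-w) (u * ζ) with hT
  have hwneg : ‖-w‖ < 1 := by simpa using hw'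
  have hTmem : ∀ ζ, ‖ζ‖ < 1 → ‖T ζ‖ < 1 := by
    intro ζ h
    apply mob_mem hwneg
    rw [norm_mul, huabs, one_mul]; exact h
  have hT0 : T 0 = w := by simp [hT, mob]
  have hus : u * (s : ℂ) = a := by rw [hu]; field_simp
  have hden2 : (1 : ℂ) + (starRingEnd ℂ) w * a ≠ 0 := by
    apply one_add_ne
    rw [norm_mul, Complex.norm_conj]
    nlinarith [norm_nonneg w, norm_nonneg a]
  have hTs : T (s : ℂ) = z := by
    rw [hT]
    simp only []
    rw [hus, mob]
    rw [map_neg, sub_neg_eq_add, neg_mul, sub_neg_eq_add]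
    rw [div_eq_iff hden2, ha, mob]
    have hdne' : (1 : ℂ) - z * (starRingEnd ℂ) w ≠ 0 := by rw [mul_comm]; exact hdne
    field_simp
    ring
  -- g = f ∘ T
  set g : ℂ → ℂ := fun ζ => f (T ζ) with hg
  have hTd : ∀ ζ, ‖ζ‖ < 1 → DifferentiableAt ℂ T ζ := by
    intro ζ h
    have h1 : ‖u * ζ‖ ≤ 1 := by
      rw [norm_mul, huabs, one_mul]; exact h.le
    have h2 : DifferentiableAt ℂ (mob (-w)) (u * ζ) :=
      (hasDerivAt_mob (-w) (mob_denom_ne hwneg h1)).differentiableAt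
    exact h2.comp ζ ((differentiable_id.const_mul u).differentiableAt)
  have hgd : DifferentiableOn ℂ g (ball 0 1) := by
    intro ζ hζ
    have hζ' : ‖ζ‖ < 1 := by
      simpa [mem_ball, dist_zero_right] using hζ
    have hTζ : T ζ ∈ ball (0 : ℂ) 1 := by
      simpa [mem_ball, dist_zero_right] using hTmem ζ hζ'
    exact ((hf.differentiableAt (isOpen_ball.mem_nhds hTζ)).comp ζ
      (hTd ζ hζ')).differentiableWithinAt
  have hgm : ∀ ζ ∈ ball (0 : ℂ) 1, |(g ζ).re| < M := by
    intro ζ hζ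
    have hζ' : ‖ζ‖ < 1 := by
      simpa [mem_ball, dist_zero_right] using hζ
    exact hmaps _ (by simpa [mem_ball, dist_zero_right] using hTmem ζ hζ')
  -- G real function
  set G : ℝ → ℝ := fun t => (g (t : ℂ)).re with hG
  have hmem : ∀ t ∈ Set.Icc (0:ℝ) s, ‖(t : ℂ)‖ < 1 := by
    intro t ht
    rw [Complex.norm_real, Real.norm_eq_abs, _root_.abs_of_nonneg ht.1]
    exact lt_of_le_of_lt ht.2 hs1
  have hGder : ∀ t ∈ Set.Icc (0:ℝ) s, HasDerivAt G ((deriv g (t : ℂ)).re) t := by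
    intro t ht
    have h1 : ((t : ℂ)) ∈ ball (0 : ℂ) 1 := by
      simpa [mem_ball, dist_zero_right] using hmem t ht
    exact ((hgd.differentiableAt (isOpen_ball.mem_nhds h1)).hasDerivAt).real_of_complex
  have hGdiff : ∀ t ∈ Set.Icc (0:ℝ) s, DifferentiableAt ℝ G t := fun t ht =>
    (hGder t ht).differentiableAt
  have hGbound : ∀ t ∈ Set.Icc (0:ℝ) s, |deriv G t| ≤ (4 * M / Real.pi) / (1 - t ^ 2) := by
    intro t ht
    rw [(hGder t ht).deriv]
    have h1 : ‖(t : ℂ)‖ < 1 := hmem t ht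
    have h2 := deriv_bound_strip hM hgd hgm h1
    have h3 : ‖(t : ℂ)‖ = |t| := by rw [Complex.norm_real, Real.norm_eq_abs]
    have h4 : |t| = t := _root_.abs_of_nonneg ht.1
    rw [h3, h4] at h2
    have h5 : (0:ℝ) < 1 - t ^ 2 := by
      have := lt_of_le_of_lt ht.2 hs1
      nlinarith [ht.1]
    have h6 : |(deriv g (t : ℂ)).re| ≤ ‖deriv g (t : ℂ)‖ :=
      Complex.abs_re_le_norm _
    rw [le_div_iff₀ h5]
    calc |(deriv g (t : ℂ)).re| * (1 - t ^ 2)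
        ≤ ‖deriv g (t : ℂ)‖ * (1 - t ^ 2) := by
          apply mul_le_mul_of_nonneg_right h6 h5.le
      _ ≤ 4 * M / Real.pi := h2
  have hfinal := mono_aux hs0.le hs1 hGdiff hGbound
  -- rewrite endpoints
  have hGs : G s = (f z).re := by
    rw [hG]
    simp only []
    rw [hg]
    simp only []
    rw [hTs]
  have hG0 : G 0 = (f w).re := by
    rw [hG]
    simp only []
    rw [hg]
    simp only [Complex.ofReal_zero]
    rw [hT0]
  rw [hGs, hG0] at hfinal
  -- identify the distance
  have hcc : ‖1 - (starRingEnd ℂ) z * w‖ = ‖1 - (starRingEnd ℂ) w * z‖ := by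
    rw [← Complex.norm_conj (1 - (starRingEnd ℂ) z * w)]
    congr 1
    rw [map_sub, map_one, map_mul, Complex.conj_conj]
    ring
  have hdist : hypDistDisk z w = artanh s := by
    rw [hypDistDisk, hsdef, ha, mob]
    congr 1
    rw [norm_div, norm_div]
    rw [hcc]
  rw [hdist]
  exact hfinal
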